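/- Let K1, F1, Z1, S1 be positive integers with Z1 < F1, and suppose there exists a (K1,F1,Z1,S1) placement delivery array satisfying Condition 1 with parameter λ. Then for every positive integer m there exists an (m·K1, λ·(F1/λ)^m, Z1·(F1/λ)^{m−1}, S1·(F1/λ)^{m−1}) placement delivery array. -/

import Mathlib

/-- A `(K,F,Z,S)` placement delivery array: an `F × K` array whose entries are either `*`
(encoded as `none`) or integers in `[1:S]` (encoded as `some s` with `s : Fin S`). -/
def IsPDA (K F Z S : ℕ) (P : Fin F → Fin K → Option (Fin S)) : Prop :=
  (∀ k : Fin K, (Finset.univ.filter fun j : Fin F => P j k = none).card = Z) ∧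
  (∀ s : Fin S, ∃ (j : Fin F) (k : Fin K), P j k = some s) ∧
  (∀ (j1 j2 : Fin F) (k1 k2 : Fin K) (s : Fin S),
      P j1 k1 = some s → P j2 k2 = some s → (j1, k1) ≠ (j2, k2) →
      P j1 k2 = none ∧ P j2 k1 = none)

/-- A PDA is `g`-regular if each integer appears exactly `g` times. -/
def PDARegular (K F S g : ℕ) (P : Fin F → Fin K → Option (Fin S)) : Prop :=
  ∀ s : Fin S,
    (Finset.univ.filter fun jk : Fin F × Fin K => P jk.1 jk.2 = some s).card = g

/-- Row `i` is a star row for the integer `s`. -/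
def PDAStarRow (K F S : ℕ) (P : Fin F → Fin K → Option (Fin S)) (i : Fin F) (s : Fin S) : Prop :=
  ∀ (j : Fin F) (k : Fin K), P j k = some s → P i k = none

/-- Condition 1 with parameter `lam`. -/
def PDACondition1 (K F Z S lam : ℕ) (P : Fin F → Fin K → Option (Fin S)) : Prop :=
  lam ∣ F ∧ lam ∣ Z ∧
  (∀ (j : Fin F) (k : Fin K),
      P j k = none ↔
        P ⟨j.val % (F / lam), Nat.lt_of_le_of_lt (Nat.mod_le _ _) j.isLt⟩ k = none) ∧
  ∃ φ : Fin S → Fin (F / lam),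
    (∀ s : Fin S, PDAStarRow K F S P (Fin.castLE (Nat.div_le_self F lam) (φ s)) s) ∧
    (∀ j : Fin (F / lam), (Finset.univ.filter fun s : Fin S => φ s = j).card * F = lam * S)

/-- Condition 2: every row contains the same number of stars. -/
def PDACondition2 (K F S : ℕ) (P : Fin F → Fin K → Option (Fin S)) : Prop :=
  ∀ j1 j2 : Fin F,
    (Finset.univ.filter fun k : Fin K => P j1 k = none).card =
    (Finset.univ.filter fun k : Fin K => P j2 k = none).card

namespace TheopmAux

/-- Row index equivalence. -/
def eRow (lam f n : ℕ) : Fin (lam * f ^ (n + 1)) ≃ Fin lam × (Fin (n + 1) → Fin f) :=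
  finProdFinEquiv.symm.trans (Equiv.prodCongr (Equiv.refl _) finFunctionFinEquiv.symm)

/-- Column index equivalence. -/
def eCol (K1 n : ℕ) : Fin ((n + 1) * K1) ≃ Fin (n + 1) × Fin K1 := finProdFinEquiv.symm

/-- Symbol index equivalence. -/
def eSym (S1 f n : ℕ) : Fin (S1 * f ^ n) ≃ Fin S1 × (Fin n → Fin f) :=
  finProdFinEquiv.symm.trans (Equiv.prodCongr (Equiv.refl _) finFunctionFinEquiv.symm)

/-- The symbol tuple used in the construction. -/
def tvec {S1 f q n : ℕ} (E : Fin S1 ≃ Fin f × Fin q) (i : Fin (n + 1)) (s0 : Fin S1)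
    (b : Fin (n + 1) → Fin f) (j : Fin (n + 1)) : Fin S1 :=
  if j = i then s0 else E.symm (b j, (E s0).2)

theorem tvec_self {S1 f q n : ℕ} (E : Fin S1 ≃ Fin f × Fin q) (i : Fin (n + 1)) (s0 : Fin S1)
    (b : Fin (n + 1) → Fin f) : tvec E i s0 b i = s0 := if_pos rfl

theorem tvec_ne {S1 f q n : ℕ} (E : Fin S1 ≃ Fin f × Fin q) {i j : Fin (n + 1)} (s0 : Fin S1)
    (b : Fin (n + 1) → Fin f) (h : j ≠ i) : tvec E i s0 b j = E.symm (b j, (E s0).2) := if_neg h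

theorem tvec_snd {S1 f q n : ℕ} (E : Fin S1 ≃ Fin f × Fin q) (i : Fin (n + 1)) (s0 : Fin S1)
    (b : Fin (n + 1) → Fin f) (j : Fin (n + 1)) : (E (tvec E i s0 b j)).2 = (E s0).2 := by
  unfold tvec; split <;> simp

theorem tvec_inj {S1 f q n : ℕ} (E : Fin S1 ≃ Fin f × Fin q) {i i' : Fin (n + 1)}
    {s0 s0' : Fin S1} {b b' : Fin (n + 1) → Fin f}
    (h0 : tvec E i s0 b 0 = tvec E i' s0' b' 0)
    (hs : ∀ j : Fin n, (E (tvec E i s0 b j.succ)).1 = (E (tvec E i' s0' b' j.succ)).1) :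
    ∀ l, tvec E i s0 b l = tvec E i' s0' b' l := by
  have hρ : (E s0).2 = (E s0').2 := by
    have h := congrArg (fun x => (E x).2) h0
    simpa [tvec_snd] using h
  intro l
  have h1 : (E (tvec E i s0 b l)).1 = (E (tvec E i' s0' b' l)).1 := by
    induction l using Fin.cases with
    | zero => exact congrArg (fun x => (E x).1) h0
    | succ j => exact hs j
  apply E.injective
  exact Prod.ext h1 (by rw [tvec_snd, tvec_snd, hρ])

/-- The recursive PDA construction. -/
def bigQ {K1 F1 S1 lam f q : ℕ} (P : Fin F1 → Fin K1 → Option (Fin S1))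
    (E : Fin S1 ≃ Fin f × Fin q) (prE : Fin lam × Fin f ≃ Fin F1) (n : ℕ) :
    Fin (lam * f ^ (n + 1)) → Fin ((n + 1) * K1) → Option (Fin (S1 * f ^ n)) :=
  fun r c =>
    (P (prE ((eRow lam f n r).1, (eRow lam f n r).2 (eCol K1 n c).1)) (eCol K1 n c).2).map
      (fun s0 => (eSym S1 f n).symm
        (tvec E (eCol K1 n c).1 s0 (eRow lam f n r).2 0,
         fun j => (E (tvec E (eCol K1 n c).1 s0 (eRow lam f n r).2 j.succ)).1))

theorem exists_pda {K1 F1 Z1 S1 lam f q : ℕ} (n : ℕ)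
    (P : Fin F1 → Fin K1 → Option (Fin S1))
    (E : Fin S1 ≃ Fin f × Fin q) (prE : Fin lam × Fin f ≃ Fin F1)
    (emb : Fin f → Fin F1)
    (hPDA : IsPDA K1 F1 Z1 S1 P)
    (H1 : ∀ (a : Fin lam) (x : Fin f) (k : Fin K1),
        P (prE (a, x)) k = none ↔ P (emb x) k = none)
    (H2 : ∀ (s : Fin S1) (j : Fin F1) (k : Fin K1),
        P j k = some s → P (emb (E s).1) k = none) :
    IsPDA ((n + 1) * K1) (lam * f ^ (n + 1)) (Z1 * f ^ n) (S1 * f ^ n) (bigQ P E prE n) := by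
  obtain ⟨hZ, hC2, hC3⟩ := hPDA
  refine ⟨?_, ?_, ?_⟩
  · -- star count in each column
    intro c
    rw [← Fintype.card_subtype]
    set i := (eCol K1 n c).1 with hi
    set k := (eCol K1 n c).2 with hk
    have e1 : {r // bigQ P E prE n r c = none} ≃
        {p : Fin lam × (Fin (n + 1) → Fin f) // P (prE (p.1, p.2 i)) k = none} :=
      (eRow lam f n).subtypeEquiv (fun r => by
        simp [bigQ, Option.map_eq_none_iff, ← hi, ← hk])
    have e2 : {p : Fin lam × (Fin (n + 1) → Fin f) // P (prE (p.1, p.2 i)) k = none} ≃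
        {y : Fin F1 × (Fin n → Fin f) // P y.1 k = none} :=
      (((Equiv.prodCongr (Equiv.refl (Fin lam)) (Fin.insertNthEquiv (fun _ => Fin f) i).symm).trans
        ((Equiv.prodAssoc (Fin lam) (Fin f) (Fin n → Fin f)).symm.trans
          (Equiv.prodCongr prE (Equiv.refl (Fin n → Fin f))))).subtypeEquiv
        (fun p => Iff.rfl))
    have e3 : {y : Fin F1 × (Fin n → Fin f) // P y.1 k = none} ≃
        {j : Fin F1 // P j k = none} × (Fin n → Fin f) :=
      { toFun := fun y => (⟨y.1.1, y.2⟩, y.1.2)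
        invFun := fun z => ⟨(z.1.1, z.2), z.1.2⟩
        left_inv := fun y => rfl
        right_inv := fun z => rfl }
    rw [Fintype.card_congr ((e1.trans e2).trans e3), Fintype.card_prod, Fintype.card_subtype,
      hZ k, Fintype.card_fun, Fintype.card_fin, Fintype.card_fin]
  · -- every symbol appears
    intro σ
    obtain ⟨⟨τ, v⟩, rfl⟩ : ∃ p, σ = (eSym S1 f n).symm p :=
      ⟨eSym S1 f n σ, (Equiv.symm_apply_apply _ _).symm⟩
    obtain ⟨j, k, hj⟩ := hC2 τ
    refine ⟨(eRow lam f n).symm ((prE.symm j).1, Fin.cases (prE.symm j).2 v),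
      (eCol K1 n).symm (0, k), ?_⟩
    have hb0 : (Fin.cases (prE.symm j).2 v : ∀ _ : Fin (n + 1), Fin f) 0 = (prE.symm j).2 := by
      simp
    simp only [bigQ, Equiv.apply_symm_apply, hb0, Prod.mk.eta, hj, Option.map_some]
    congr 1
    apply congrArg
    refine Prod.ext ?_ ?_
    · simp [tvec_self]
    · funext j'
      have hne : (j'.succ : Fin (n + 1)) ≠ 0 := Fin.succ_ne_zero j'
      simp [tvec_ne E τ _ hne, Fin.cases_succ]
  · -- condition C3
    intro r1 r2 c1 c2 σ h1 h2 hne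
    obtain ⟨⟨a, b⟩, rfl⟩ : ∃ p, r1 = (eRow lam f n).symm p :=
      ⟨eRow lam f n r1, (Equiv.symm_apply_apply _ _).symm⟩
    obtain ⟨⟨a', b'⟩, rfl⟩ : ∃ p, r2 = (eRow lam f n).symm p :=
      ⟨eRow lam f n r2, (Equiv.symm_apply_apply _ _).symm⟩
    obtain ⟨⟨i, k⟩, rfl⟩ : ∃ p, c1 = (eCol K1 n).symm p :=
      ⟨eCol K1 n c1, (Equiv.symm_apply_apply _ _).symm⟩
    obtain ⟨⟨i', k'⟩, rfl⟩ : ∃ p, c2 = (eCol K1 n).symm p :=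
      ⟨eCol K1 n c2, (Equiv.symm_apply_apply _ _).symm⟩
    simp only [bigQ, Equiv.apply_symm_apply] at h1 h2 ⊢
    obtain ⟨s0, hP1, hσ1⟩ := Option.map_eq_some_iff.mp h1
    obtain ⟨s0', hP2, hσ2⟩ := Option.map_eq_some_iff.mp h2
    have hpair := (eSym S1 f n).symm.injective (hσ1.trans hσ2.symm)
    have h0 : tvec E i s0 b 0 = tvec E i' s0' b' 0 := congrArg Prod.fst hpair
    have hsfn : ∀ j : Fin n,
        (E (tvec E i s0 b j.succ)).1 = (E (tvec E i' s0' b' j.succ)).1 :=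
      fun j => congrFun (congrArg Prod.snd hpair) j
    have hall := tvec_inj E h0 hsfn
    by_cases hii : i = i'
    · subst hii
      have hs : s0 = s0' := by
        have h := hall i
        rwa [tvec_self, tvec_self] at h
      subst hs
      have hbb : ∀ l, l ≠ i → b l = b' l := by
        intro l hl
        have h := hall l
        rw [tvec_ne E s0 b hl, tvec_ne E s0 b' hl] at h
        have := E.symm.injective h
        exact congrArg Prod.fst this
      by_cases hjj : prE (a, b i) = prE (a', b' i)
      · by_cases hkk : k = k'
        · exfalso
          subst hkk
          have hax : (a, b i) = (a', b' i) := prE.injective hjj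
          have ha : a = a' := congrArg Prod.fst hax
          have hbi : b i = b' i := congrArg Prod.snd hax
          have hb : b = b' := by
            funext l
            by_cases hl : l = i
            · subst hl; exact hbi
            · exact hbb l hl
          exact hne (by rw [ha, hb])
        · exfalso
          have hne2 : (prE (a, b i), k) ≠ (prE (a', b' i), k') := by
            intro h
            exact hkk (congrArg Prod.snd h)
          obtain ⟨w1, w2⟩ := hC3 _ _ k k' s0 hP1 hP2 hne2
          rw [hjj, w2] at hP1
          exact Option.some_ne_none s0 hP1.symm
      · have hne2 : (prE (a, b i), k) ≠ (prE (a', b' i), k') := by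
          intro h
          exact hjj (congrArg Prod.fst h)
        obtain ⟨w1, w2⟩ := hC3 _ _ k k' s0 hP1 hP2 hne2
        constructor
        · rw [Option.map_eq_none_iff]
          exact w1
        · rw [Option.map_eq_none_iff]
          exact w2
    · -- i ≠ i'
      have hbi' : b i' = (E s0').1 := by
        have h := hall i'
        rw [tvec_ne E s0 b (fun hc => hii hc.symm), tvec_self] at h
        have := congrArg (fun x => (E x).1) h
        simpa using this
      have hb'i : b' i = (E s0).1 := by
        have h := hall i
        rw [tvec_self, tvec_ne E s0' b' hii] at h
        have := congrArg (fun x => (E x).1) h.symm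
        simpa using this
      constructor
      · rw [Option.map_eq_none_iff, H1, hbi']
        exact H2 s0' _ k' hP2
      · rw [Option.map_eq_none_iff, H1, hb'i]
        exact H2 s0 _ k hP1

end TheopmAux

open TheopmAux in
/-- Theorem 1: if there is a `(K1,F1,Z1,S1)` PDA satisfying Condition 1 with
parameter `lam`, then for every positive integer `m` there is an
`(m·K1, lam·(F1/lam)^m, Z1·(F1/lam)^(m-1), S1·(F1/lam)^(m-1))` PDA. -/
theorem theopm (K1 F1 Z1 S1 lam : ℕ)
    (hK1 : 0 < K1) (hF1 : 0 < F1) (hZ1 : 0 < Z1) (hS1 : 0 < S1) (hlam : 0 < lam)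
    (hZF : Z1 < F1)
    (hex : ∃ P : Fin F1 → Fin K1 → Option (Fin S1),
        IsPDA K1 F1 Z1 S1 P ∧ PDACondition1 K1 F1 Z1 S1 lam P) :
    ∀ m : ℕ, 0 < m →
      ∃ Q : Fin (lam * (F1 / lam) ^ m) → Fin (m * K1) →
            Option (Fin (S1 * (F1 / lam) ^ (m - 1))),
        IsPDA (m * K1) (lam * (F1 / lam) ^ m) (Z1 * (F1 / lam) ^ (m - 1))
          (S1 * (F1 / lam) ^ (m - 1)) Q := by
  obtain ⟨P, hPDA, hdvdF, hdvdZ, hstar, φ, hφstar, hφcard⟩ := hex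
  intro m hm
  obtain ⟨n, rfl⟩ : ∃ n, m = n + 1 := ⟨m - 1, (Nat.succ_pred_eq_of_pos hm).symm⟩
  simp only [Nat.add_sub_cancel]
  have hF1eq : lam * (F1 / lam) = F1 := Nat.mul_div_cancel' hdvdF
  have hfpos : 0 < F1 / lam := Nat.div_pos (Nat.le_of_dvd hF1 hdvdF) hlam
  -- the row-pairing equivalence
  set prE : Fin lam × Fin (F1 / lam) ≃ Fin F1 :=
    finProdFinEquiv.trans (finCongr hF1eq) with hprE
  have hprE_val : ∀ (a : Fin lam) (x : Fin (F1 / lam)),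
      ((prE (a, x)) : ℕ) % (F1 / lam) = x := by
    intro a x
    have : ((prE (a, x)) : ℕ) = x + (F1 / lam) * a := by
      simp [hprE, finProdFinEquiv]
    rw [this, Nat.add_mul_mod_self_left, Nat.mod_eq_of_lt x.isLt]
  -- fibers of φ all have the same size
  have hfib : ∀ v : Fin (F1 / lam),
      (Finset.univ.filter fun s : Fin S1 => φ s = v).card * (F1 / lam) = S1 := by
    intro v
    apply Nat.eq_of_mul_eq_mul_left hlam
    calc lam * ((Finset.univ.filter fun s : Fin S1 => φ s = v).card * (F1 / lam))
        = (Finset.univ.filter fun s : Fin S1 => φ s = v).card * (lam * (F1 / lam)) := by ring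
      _ = (Finset.univ.filter fun s : Fin S1 => φ s = v).card * F1 := by rw [hF1eq]
      _ = lam * S1 := hφcard v
  set q := (Finset.univ.filter fun s : Fin S1 => φ s = (⟨0, hfpos⟩ : Fin (F1 / lam))).card with hq
  have hcard : ∀ v : Fin (F1 / lam), Fintype.card {s : Fin S1 // φ s = v} = q := by
    intro v
    rw [Fintype.card_subtype]
    exact Nat.eq_of_mul_eq_mul_right hfpos ((hfib v).trans (hfib _).symm)
  set E : Fin S1 ≃ Fin (F1 / lam) × Fin q :=
    (Equiv.sigmaFiberEquiv φ).symm.trans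
      ((Equiv.sigmaCongrRight (fun v => Fintype.equivFinOfCardEq (hcard v))).trans
        (Equiv.sigmaEquivProd (Fin (F1 / lam)) (Fin q))) with hE
  have hE1 : ∀ s, (E s).1 = φ s := fun s => rfl
  set emb : Fin (F1 / lam) → Fin F1 := Fin.castLE (Nat.div_le_self F1 lam) with hemb
  have H1 : ∀ (a : Fin lam) (x : Fin (F1 / lam)) (k : Fin K1),
      P (prE (a, x)) k = none ↔ P (emb x) k = none := by
    intro a x k
    have harg : (⟨((prE (a, x)) : ℕ) % (F1 / lam),
        Nat.lt_of_le_of_lt (Nat.mod_le _ _) (prE (a, x)).isLt⟩ : Fin F1) = emb x := by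
      apply Fin.ext
      simp [hprE_val a x, hemb]
    exact (hstar (prE (a, x)) k).trans (by rw [harg])
  have H2 : ∀ (s : Fin S1) (j : Fin F1) (k : Fin K1),
      P j k = some s → P (emb (E s).1) k = none := by
    intro s j k h
    have := hφstar s j k h
    have heq : emb (E s).1 = Fin.castLE (Nat.div_le_self F1 lam) (φ s) := by
      rw [hE1]
    rwa [heq]
  exact ⟨bigQ P E prE n, exists_pda n P E prE emb hPDA H1 H2⟩
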